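/- Fix β ∈ (0,1), σ_Z ≥ 0 and τ_Q > 0. For α ∈ (0,1) write σ_α = √(α² + (1−α)² + σ_Z²) and c(α) = αβ + (1−α)(1−β). Then the mean admitted type α ↦ (α/σ_α)·H(τ_Q σ_α / c(α)) is strictly increasing on (0,1), and the mean admitted soft skill α ↦ ((1−α)/σ_α)·H(τ_Q σ_α / c(α)) is strictly decreasing on (0,1). -/

import Mathlib

open MeasureTheory Real Set Filter Topology

/-- Standard normal pdf. -/
noncomputable def phi (x : ℝ) : ℝ := Real.exp (-x ^ 2 / 2) / Real.sqrt (2 * Real.pi)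

/-- Standard normal cdf. -/
noncomputable def Phi (x : ℝ) : ℝ := ∫ y in Set.Iic x, phi y

/-- Standard normal hazard rate. -/
noncomputable def Haz (x : ℝ) : ℝ := phi x / (1 - Phi x)

lemma phi_pos (x : ℝ) : 0 < phi x :=
  div_pos (Real.exp_pos _) (Real.sqrt_pos.2 (by positivity))

lemma continuous_phi : Continuous phi := by
  unfold phi; fun_prop

lemma hasDerivAt_phi (x : ℝ) : HasDerivAt phi (-x * phi x) x := by
  have h : HasDerivAt (fun x : ℝ => -x ^ 2 / 2) (-x) x := by
    have := ((hasDerivAt_pow 2 x).neg).div_const 2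
    simpa using this.congr_deriv (by ring)
  have := h.exp.div_const (Real.sqrt (2 * Real.pi))
  refine this.congr_deriv ?_
  unfold phi; ring

lemma integrable_phi : Integrable phi := by
  have h : Integrable (fun x : ℝ => Real.exp (-(1/2 : ℝ) * x ^ 2)) :=
    integrable_exp_neg_mul_sq (by norm_num)
  have := h.div_const (Real.sqrt (2 * Real.pi))
  refine this.congr (Filter.Eventually.of_forall fun x => ?_)
  unfold phi; ring_nf

lemma integral_phi : ∫ x, phi x = 1 := by
  have h : phi = fun x => Real.exp (-(1/2 : ℝ) * x ^ 2) / Real.sqrt (2 * Real.pi) := by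
    funext x; unfold phi; ring_nf
  rw [h, integral_div, integral_gaussian]
  rw [div_eq_one_iff_eq (by positivity)]
  norm_num
  ring

lemma one_sub_Phi (x : ℝ) : 1 - Phi x = ∫ t in Ioi x, phi t := by
  have h := intervalIntegral.integral_Iic_add_Ioi (b := x) integrable_phi.integrableOn integrable_phi.integrableOn
  rw [integral_phi] at h
  unfold Phi; linarith

lemma one_sub_Phi_pos (x : ℝ) : 0 < 1 - Phi x := by
  rw [one_sub_Phi]
  refine (setIntegral_pos_iff_support_of_nonneg_ae
    (Filter.Eventually.of_forall fun t => (phi_pos t).le) integrable_phi.integrableOn).2 ?_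
  have : Function.support phi = Set.univ := by
    ext t; simp [Function.mem_support, (phi_pos t).ne']
  rw [this, Set.univ_inter]
  simp [Real.volume_Ioi]

lemma Phi_lt_one (x : ℝ) : Phi x < 1 := by linarith [one_sub_Phi_pos x]








lemma tendsto_phi : Tendsto phi atTop (𝓝 0) := by
  have h1 : Tendsto (fun x : ℝ => -x ^ 2 / 2) atTop atBot := by
    apply Filter.Tendsto.atBot_div_const (by norm_num)
    exact tendsto_neg_atBot_iff.2 (tendsto_pow_atTop (by norm_num))
  have := (Real.tendsto_exp_atBot.comp h1).div_const (Real.sqrt (2 * Real.pi))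
  simp only [Function.comp_def, zero_div] at this
  exact this

lemma tendsto_xphi : Tendsto (fun x => x * phi x) atTop (𝓝 0) := by
  have hg : Tendsto (fun x : ℝ => (x * Real.exp (-x)) / Real.sqrt (2 * Real.pi)) atTop (𝓝 0) := by
    have := (tendsto_pow_mul_exp_neg_atTop_nhds_zero 1).div_const (Real.sqrt (2 * Real.pi))
    simpa using this
  apply squeeze_zero' ?_ ?_ hg
  · filter_upwards [eventually_ge_atTop (0:ℝ)] with x hx
    exact mul_nonneg hx (phi_pos x).le
  · filter_upwards [eventually_ge_atTop (2:ℝ)] with x hx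
    have hx0 : (0:ℝ) ≤ x := by linarith
    have hexp : Real.exp (-x ^ 2 / 2) ≤ Real.exp (-x) := by
      apply Real.exp_le_exp.2; nlinarith
    unfold phi
    rw [div_eq_mul_inv, div_eq_mul_inv, ← mul_assoc]
    apply mul_le_mul_of_nonneg_right _ (by positivity)
    exact mul_le_mul_of_nonneg_left hexp hx0

lemma integral_Ioi_xphi {x : ℝ} (hx : 0 ≤ x) :
    (∫ t in Ioi x, t * phi t = phi x) ∧ IntegrableOn (fun t => t * phi t) (Ioi x) := by
  have hd : ∀ t ∈ Ici x, HasDerivAt (fun t => -phi t) (t * phi t) t := by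
    intro t _
    exact (hasDerivAt_phi t).neg.congr_deriv (by ring)
  have hpos : ∀ t ∈ Ioi x, 0 ≤ t * phi t := fun t ht =>
    mul_nonneg (le_trans hx (le_of_lt ht)) (phi_pos t).le
  have htend : Tendsto (fun t => -phi t) atTop (𝓝 0) := by
    simpa using tendsto_phi.neg
  constructor
  · have := integral_Ioi_of_hasDerivAt_of_nonneg' hd hpos htend
    simpa using this
  · exact integrableOn_Ioi_deriv_of_nonneg' hd hpos htend

lemma one_sub_Phi_eq (x : ℝ) : 1 - Phi x = ∫ t in Ioi x, phi t := one_sub_Phi x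

lemma mills_upper {x : ℝ} (hx : 0 < x) : x * (1 - Phi x) ≤ phi x := by
  obtain ⟨hint, hintegr⟩ := integral_Ioi_xphi hx.le
  rw [one_sub_Phi_eq, ← integral_const_mul]
  rw [← hint]
  apply setIntegral_mono_on (integrable_phi.integrableOn.const_mul x) hintegr measurableSet_Ioi
  intro t ht
  exact mul_le_mul_of_nonneg_right (le_of_lt ht) (phi_pos t).le

lemma hasDerivAt_Phi (x : ℝ) : HasDerivAt Phi (phi x) x := by
  have key : Phi = fun y => Phi 0 + ∫ t in (0:ℝ)..y, phi t := by
    funext y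
    rw [← intervalIntegral.integral_Iic_sub_Iic integrable_phi.integrableOn
      integrable_phi.integrableOn]
    unfold Phi; ring
  rw [key]
  exact ((intervalIntegral.integral_hasDerivAt_right
    integrable_phi.intervalIntegrable
    continuous_phi.stronglyMeasurable.stronglyMeasurableAtFilter
    continuous_phi.continuousAt)).const_add (Phi 0)

lemma hasDerivAt_Haz (x : ℝ) : HasDerivAt Haz (Haz x * (Haz x - x)) x := by
  have h1 : 1 - Phi x ≠ 0 := (one_sub_Phi_pos x).ne'
  have hden : HasDerivAt (fun y => 1 - Phi y) (-phi x) x := by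
    simpa using (hasDerivAt_Phi x).const_sub 1
  have := (hasDerivAt_phi x).div hden h1
  have heq : Haz = fun y => phi y / (1 - Phi y) := by funext y; rfl
  rw [heq]
  refine this.congr_deriv (Eq.symm ?_)
  show phi x / (1 - Phi x) * (phi x / (1 - Phi x) - x) = _
  field_simp
  ring

lemma tendsto_one_sub_Phi : Tendsto (fun x => 1 - Phi x) atTop (𝓝 0) := by
  apply squeeze_zero' (Filter.Eventually.of_forall fun x => (one_sub_Phi_pos x).le)
    ?_ tendsto_phi
  filter_upwards [eventually_ge_atTop (1:ℝ)] with x hx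
  have h := mills_upper (lt_of_lt_of_le zero_lt_one hx)
  nlinarith [one_sub_Phi_pos x]

lemma tendsto_sq_one_sub_Phi : Tendsto (fun x => (1 + x ^ 2) * (1 - Phi x)) atTop (𝓝 0) := by
  have hg : Tendsto (fun x => (1 - Phi x) + x * phi x) atTop (𝓝 0) := by
    simpa using tendsto_one_sub_Phi.add tendsto_xphi
  apply squeeze_zero' ?_ ?_ hg
  · filter_upwards [eventually_ge_atTop (0:ℝ)] with x hx
    exact mul_nonneg (by positivity) (one_sub_Phi_pos x).le
  · filter_upwards [eventually_ge_atTop (1:ℝ)] with x hx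
    have h := mills_upper (lt_of_lt_of_le zero_lt_one hx)
    nlinarith [one_sub_Phi_pos x]

lemma mills_lower {x : ℝ} (hx : 0 < x) : x * phi x ≤ (1 + x ^ 2) * (1 - Phi x) := by
  set r : ℝ → ℝ := fun y => (1 + y ^ 2) * (1 - Phi y) - y * phi y with hr
  have hd : ∀ y ∈ Ici x, HasDerivAt r (2 * (y * (1 - Phi y) - phi y)) y := by
    intro y _
    have h1 : HasDerivAt (fun y : ℝ => (1 + y ^ 2) * (1 - Phi y))
        (2 * y * (1 - Phi y) + (1 + y ^ 2) * (-phi y)) y := by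
      have ha : HasDerivAt (fun y : ℝ => 1 + y ^ 2) (2 * y) y := by
        simpa using ((hasDerivAt_pow 2 y).const_add 1)
      have hb : HasDerivAt (fun y => 1 - Phi y) (-phi y) y := by
        simpa using (hasDerivAt_Phi y).const_sub 1
      exact ha.mul hb
    have h2 : HasDerivAt (fun y : ℝ => y * phi y) (phi y + y * (-y * phi y)) y := by
      exact ((hasDerivAt_id' y).mul (hasDerivAt_phi y)).congr_deriv (by ring)
    have := h1.sub h2
    refine this.congr_deriv ?_
    ring
  have hneg : ∀ y ∈ Ioi x, 2 * (y * (1 - Phi y) - phi y) ≤ 0 := by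
    intro y hy
    have := mills_upper (hx.trans hy)
    linarith
  have htend : Tendsto r atTop (𝓝 0) := by
    simpa using tendsto_sq_one_sub_Phi.sub tendsto_xphi
  have heq := integral_Ioi_of_hasDerivAt_of_nonpos' hd hneg htend
  have hle : (∫ y in Ioi x, 2 * (y * (1 - Phi y) - phi y)) ≤ 0 :=
    setIntegral_nonpos measurableSet_Ioi hneg
  rw [heq] at hle
  simp only [hr] at hle
  linarith







lemma Haz_pos (x : ℝ) : 0 < Haz x := div_pos (phi_pos x) (one_sub_Phi_pos x)

lemma Haz_ge {x : ℝ} (hx : 0 < x) : x ≤ Haz x :=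
  (le_div_iff₀ (one_sub_Phi_pos x)).2 (mills_upper hx)

lemma Haz_le {x : ℝ} (hx : 0 < x) : x * Haz x ≤ 1 + x ^ 2 := by
  unfold Haz
  rw [show x * (phi x / (1 - Phi x)) = x * phi x / (1 - Phi x) from by ring,
    div_le_iff₀ (one_sub_Phi_pos x)]
  exact mills_lower hx

lemma key_pos (a b σZ τ σ c h u : ℝ) (ha0 : 0 < a) (ha1 : a < 1) (hb0 : 0 < b) (hb1 : b < 1)
    (hτ : 0 < τ) (hσ : 0 < σ) (hσ2 : σ ^ 2 = a ^ 2 + (1 - a) ^ 2 + σZ ^ 2)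
    (hcdef : c = a * b + (1 - a) * (1 - b)) (hc : 0 < c) (hu : u = τ * σ / c)
    (hh : 0 < h) (hm0 : u ≤ h) (hm1 : u * h ≤ 1 + u ^ 2) :
    0 < (1 * σ - a * ((2 * a - 1) / σ)) / σ ^ 2 * h +
      a / σ * (h * (h - u) * ((τ * ((2 * a - 1) / σ) * c - τ * σ * (2 * b - 1)) / c ^ 2)) := by
  have hσZ2 : 0 ≤ σZ ^ 2 := sq_nonneg σZ
  set D : ℝ := (2 * a - 1) * c - σ ^ 2 * (2 * b - 1) with hD
  set m : ℝ := u * (h - u) with hm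
  have hu0 : 0 < u := by rw [hu]; positivity
  have hm0' : 0 ≤ m := mul_nonneg hu0.le (by linarith)
  have hm1' : m ≤ 1 := by nlinarith
  have hident : (1 - a + σZ ^ 2) * c + a * D = σ ^ 2 * (1 - b) := by
    rw [hD, hcdef, hσ2]; ring
  have hP : 0 < (1 - a + σZ ^ 2) * c := mul_pos (by linarith) hc
  have hQ : 0 < σ ^ 2 * (1 - b) := mul_pos (by positivity) (by linarith)
  have hN : 0 < (1 - a + σZ ^ 2) * c + a * m * D := by
    have haD : a * D = σ ^ 2 * (1 - b) - (1 - a + σZ ^ 2) * c := by linarith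
    have hsplit : (1 - a + σZ ^ 2) * c + a * m * D =
        (1 - m) * ((1 - a + σZ ^ 2) * c) + m * (σ ^ 2 * (1 - b)) := by
      linear_combination m * haD
    rw [hsplit]
    rcases le_total m (1/2) with hm2 | hm2
    · nlinarith
    · nlinarith
  have hEq : (1 * σ - a * ((2 * a - 1) / σ)) / σ ^ 2 * h +
      a / σ * (h * (h - u) * ((τ * ((2 * a - 1) / σ) * c - τ * σ * (2 * b - 1)) / c ^ 2)) =
      h * ((1 - a + σZ ^ 2) * c + a * m * D) / (σ ^ 2 * σ * c) := by
    rw [hm, hu, hD]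
    have h1 : (1:ℝ) - a + σZ ^ 2 = σ ^ 2 - a * (2 * a - 1) := by rw [hσ2]; ring
    rw [h1]
    field_simp
  rw [hEq]
  positivity

lemma core_hasDerivAt (b σZ τ : ℝ) (hb0 : 0 < b) (hb1 : b < 1) (hτ : 0 < τ)
    {a : ℝ} (ha : a ∈ Ioo (0:ℝ) 1) :
    ∃ E : ℝ, 0 < E ∧ HasDerivAt (fun a : ℝ => a / Real.sqrt (a ^ 2 + (1 - a) ^ 2 + σZ ^ 2) *
      Haz (τ * Real.sqrt (a ^ 2 + (1 - a) ^ 2 + σZ ^ 2) / (a * b + (1 - a) * (1 - b)))) E a := by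
  obtain ⟨ha0, ha1⟩ := ha
  set s : ℝ := a ^ 2 + (1 - a) ^ 2 + σZ ^ 2 with hs
  have hspos : 0 < s := by nlinarith [sq_nonneg σZ, sq_nonneg (1 - a)]
  set σ : ℝ := Real.sqrt s with hσdef
  have hσ : 0 < σ := Real.sqrt_pos.2 hspos
  have hσ2 : σ ^ 2 = s := Real.sq_sqrt hspos.le
  set c : ℝ := a * b + (1 - a) * (1 - b) with hcdef
  have hc : 0 < c := by nlinarith
  set u : ℝ := τ * σ / c with hu
  have hu0 : 0 < u := by positivity
  -- derivative of s
  have hsd : HasDerivAt (fun a : ℝ => a ^ 2 + (1 - a) ^ 2 + σZ ^ 2) (4 * a - 2) a := by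
    have h1 : HasDerivAt (fun a : ℝ => a ^ 2) (2 * a) a := by simpa using hasDerivAt_pow 2 a
    have h2 : HasDerivAt (fun a : ℝ => (1 - a) ^ 2) (2 * (1 - a) * (-1)) a := by
      exact (((hasDerivAt_id a).const_sub 1).pow 2).congr_deriv (by simp)
    have := (h1.add h2).add_const (σZ ^ 2)
    exact this.congr_deriv (by ring)
  -- derivative of σ
  have hσd : HasDerivAt (fun a : ℝ => Real.sqrt (a ^ 2 + (1 - a) ^ 2 + σZ ^ 2))
      ((2 * a - 1) / σ) a := by
    have := (Real.hasDerivAt_sqrt hspos.ne').comp a hsd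
    refine this.congr_deriv ?_
    rw [← hσdef]
    field_simp
    ring
  -- derivative of c
  have hcd : HasDerivAt (fun a : ℝ => a * b + (1 - a) * (1 - b)) (2 * b - 1) a := by
    have := ((hasDerivAt_id a).mul_const b).add (((hasDerivAt_id a).const_sub 1).mul_const (1 - b))
    exact this.congr_deriv (by ring)
  -- derivative of u
  have hud : HasDerivAt (fun a : ℝ => τ * Real.sqrt (a ^ 2 + (1 - a) ^ 2 + σZ ^ 2) /
      (a * b + (1 - a) * (1 - b)))
      ((τ * ((2 * a - 1) / σ) * c - τ * σ * (2 * b - 1)) / c ^ 2) a := by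
    exact (hσd.const_mul τ).div hcd hc.ne'
  -- derivative of a/σ(a)
  have hg1 : HasDerivAt (fun a : ℝ => a / Real.sqrt (a ^ 2 + (1 - a) ^ 2 + σZ ^ 2))
      ((1 * σ - a * ((2 * a - 1) / σ)) / σ ^ 2) a := by
    exact (hasDerivAt_id a).div hσd hσ.ne'
  -- derivative of Haz ∘ u
  set h : ℝ := Haz u with hhdef
  have hHd : HasDerivAt (fun a : ℝ => Haz (τ * Real.sqrt (a ^ 2 + (1 - a) ^ 2 + σZ ^ 2) /
      (a * b + (1 - a) * (1 - b))))
      (h * (h - u) * ((τ * ((2 * a - 1) / σ) * c - τ * σ * (2 * b - 1)) / c ^ 2)) a := by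
    exact (hasDerivAt_Haz u).comp a hud
  have htotal := hg1.mul hHd
  refine ⟨_, ?_, htotal⟩
  have hmain := key_pos a b σZ τ σ c h u ha0 ha1 hb0 hb1 hτ hσ (by rw [hσ2])
    hcdef hc hu (Haz_pos u) (Haz_ge hu0) (Haz_le hu0)
  have hau : τ * Real.sqrt (a ^ 2 + (1 - a) ^ 2 + σZ ^ 2) / (a * b + (1 - a) * (1 - b)) = u := rfl
  have haσ : a / Real.sqrt (a ^ 2 + (1 - a) ^ 2 + σZ ^ 2) = a / σ := rfl
  rw [hau, haσ, ← hhdef]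
  nlinarith [hmain]

lemma core (b σZ τ : ℝ) (hb0 : 0 < b) (hb1 : b < 1) (hτ : 0 < τ) :
    StrictMonoOn (fun a : ℝ => a / Real.sqrt (a ^ 2 + (1 - a) ^ 2 + σZ ^ 2) *
      Haz (τ * Real.sqrt (a ^ 2 + (1 - a) ^ 2 + σZ ^ 2) / (a * b + (1 - a) * (1 - b))))
      (Ioo 0 1) := by
  apply strictMonoOn_of_deriv_pos (convex_Ioo 0 1)
  · intro x hx
    obtain ⟨E, _, hE⟩ := core_hasDerivAt b σZ τ hb0 hb1 hτ hx
    exact hE.continuousAt.continuousWithinAt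
  · intro x hx
    rw [interior_Ioo] at hx
    obtain ⟨E, hEpos, hE⟩ := core_hasDerivAt b σZ τ hb0 hb1 hτ hx
    rw [hE.deriv]
    exact hEpos

theorem stmt7 (β σZ τQ : ℝ) (hβ : β ∈ Set.Ioo (0 : ℝ) 1) (hσZ : 0 ≤ σZ) (hτ : 0 < τQ)
    (σα c : ℝ → ℝ)
    (hσα : ∀ α, σα α = Real.sqrt (α ^ 2 + (1 - α) ^ 2 + σZ ^ 2))
    (hc : ∀ α, c α = α * β + (1 - α) * (1 - β)) :
    StrictMonoOn (fun α => α / σα α * Haz (τQ * σα α / c α)) (Set.Ioo 0 1) ∧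
    StrictAntiOn (fun α => (1 - α) / σα α * Haz (τQ * σα α / c α)) (Set.Ioo 0 1) := by
  obtain ⟨hβ0, hβ1⟩ := hβ
  constructor
  · have h1 : (fun α => α / σα α * Haz (τQ * σα α / c α)) =
        (fun a : ℝ => a / Real.sqrt (a ^ 2 + (1 - a) ^ 2 + σZ ^ 2) *
          Haz (τQ * Real.sqrt (a ^ 2 + (1 - a) ^ 2 + σZ ^ 2) / (a * β + (1 - a) * (1 - β)))) := by
      funext a; rw [hσα, hc]
    rw [h1]
    exact core β σZ τQ hβ0 hβ1 hτ
  · intro x hx y hy hxy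
    have hx' : 1 - x ∈ Ioo (0:ℝ) 1 := ⟨by linarith [hx.2], by linarith [hx.1]⟩
    have hy' : 1 - y ∈ Ioo (0:ℝ) 1 := ⟨by linarith [hy.2], by linarith [hy.1]⟩
    have key := core (1 - β) σZ τQ (by linarith) (by linarith) hτ hy' hx' (by linarith)
    have hrw : ∀ z : ℝ, (fun a : ℝ => a / Real.sqrt (a ^ 2 + (1 - a) ^ 2 + σZ ^ 2) *
        Haz (τQ * Real.sqrt (a ^ 2 + (1 - a) ^ 2 + σZ ^ 2) /
          (a * (1 - β) + (1 - a) * (1 - (1 - β))))) (1 - z) =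
        (1 - z) / σα z * Haz (τQ * σα z / c z) := by
      intro z
      have e1 : (1 - z) ^ 2 + (1 - (1 - z)) ^ 2 + σZ ^ 2 = z ^ 2 + (1 - z) ^ 2 + σZ ^ 2 := by ring
      have e2 : (1 - z) * (1 - β) + (1 - (1 - z)) * (1 - (1 - β)) = z * β + (1 - z) * (1 - β) := by
        ring
      simp only [e1, e2, hσα, hc]
    simpa only [hrw x, hrw y] using key
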